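/- Let b(q,v) = ∑_{p=0}^{v} (−1)^p C(v,p) s(p+1, p−q+1). Then b(q,2q) = (−1)^q ∏_{i=0}^{q−1} (2q−2i−1) = (−1)^q (2q−1)!! for all q ≥ 0, and b(q,v) = 0 whenever v > 2q. -/

import Mathlib

open Finset Polynomial fwdDiff

noncomputable def stirlingFst (n : ℕ) (k : ℤ) : ℤ :=
  if 0 ≤ k then (∏ i ∈ Finset.range n, (X - C (i : ℤ))).coeff k.toNat else 0

noncomputable def b (q v : ℕ) : ℤ :=
  ∑ p ∈ Finset.range (v + 1), (-1 : ℤ) ^ p * (v.choose p) * stirlingFst (p + 1) ((p : ℤ) - q + 1)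

lemma stirlingRec (n : ℕ) (k : ℤ) :
    stirlingFst (n+1) k = stirlingFst n (k-1) - n * stirlingFst n k := by
  unfold stirlingFst
  rcases lt_trichotomy k 0 with hk | hk | hk
  · simp [not_le.mpr hk, not_le.mpr (by linarith : k - 1 < 0)]
    intro h; omega
  · subst hk
    simp only [le_refl, if_pos, Int.toNat_zero]
    rw [Finset.prod_range_succ, Polynomial.mul_coeff_zero]
    simp [mul_comm]
  · have h1 : (0:ℤ) ≤ k := le_of_lt hk
    have h0 : (0:ℤ) ≤ k - 1 := by linarith
    simp only [if_pos h1, if_pos h0]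
    obtain ⟨m, hm⟩ : ∃ m : ℕ, k = (m : ℤ) + 1 := ⟨(k-1).toNat, by omega⟩
    subst hm
    rw [Finset.prod_range_succ, mul_sub, Polynomial.coeff_sub, Polynomial.coeff_mul_C]
    simp only [show ((m:ℤ)+1).toNat = m + 1 by omega, show ((m:ℤ)+1-1).toNat = m by omega,
      Polynomial.coeff_mul_X]
    ring

/-- a q p = s(p+1, p-q+1) -/
noncomputable def a (q : ℕ) : ℕ → ℤ := fun p => stirlingFst (p + 1) ((p : ℤ) - q + 1)

lemma a_zero (p : ℕ) : a 0 p = 1 := by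
  unfold a stirlingFst
  simp only [Nat.cast_zero, sub_zero]
  rw [if_pos (by positivity : (0:ℤ) ≤ (p:ℤ) + 1)]
  have hmon : (∏ i ∈ Finset.range (p+1), (X - C (i : ℤ))).Monic :=
    monic_prod_of_monic _ _ fun i _ => monic_X_sub_C (i:ℤ)
  have hdeg : (∏ i ∈ Finset.range (p+1), (X - C (i : ℤ))).natDegree = p + 1 := by
    rw [Polynomial.natDegree_prod_of_monic _ _ fun i _ => monic_X_sub_C _,
      Finset.sum_congr rfl fun i _ => Polynomial.natDegree_X_sub_C _,
      Finset.sum_const, smul_eq_mul, mul_one, Finset.card_range]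
  have h2 := hmon.coeff_natDegree
  rw [hdeg] at h2
  rw [show ((p:ℤ) + 1).toNat = p + 1 by omega, h2]

lemma fwdDiff_a (q p : ℕ) :
    Δ_[(1:ℕ)] (a (q+1)) p = -((p:ℤ) + 1) * a q p := by
  unfold a
  simp only [fwdDiff]
  push_cast
  have h := stirlingRec (p+1) ((p:ℤ) - q + 1)
  have e1 : ((p:ℤ)+1) - (q+1) + 1 = (p:ℤ) - q + 1 := by ring
  have e2 : ((p:ℤ) - q + 1) - 1 = (p:ℤ) - (q+1) + 1 := by ring
  rw [e1, h, e2]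
  push_cast
  ring

lemma fwdDiff_iter_neg (n : ℕ) (f : ℕ → ℤ) : (Δ_[(1:ℕ)])^[n] (-f) = -(Δ_[(1:ℕ)])^[n] f := by
  induction n generalizing f with
  | zero => simp
  | succ n ih =>
    rw [Function.iterate_succ_apply, show Δ_[(1:ℕ)] (-f) = -Δ_[(1:ℕ)] f from by
      funext x; simp only [fwdDiff, Pi.neg_apply]; ring, ih, ← Function.iterate_succ_apply]

/-- Leibniz-type formula for multiplying by (p+1). -/
lemma fwdDiff_iter_mul (m : ℕ) (f : ℕ → ℤ) (x : ℕ) :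
    (Δ_[(1:ℕ)])^[m+1] (fun p : ℕ => ((p:ℤ) + 1) * f p) x
      = ((x:ℤ) + 2 + m) * (Δ_[(1:ℕ)])^[m+1] f x + (m + 1) * (Δ_[(1:ℕ)])^[m] f x := by
  induction m generalizing f x with
  | zero =>
    simp only [zero_add, Function.iterate_one, Function.iterate_zero, id_eq, fwdDiff]
    push_cast
    ring
  | succ m ih =>
    have hstep : ∀ (g : ℕ → ℤ) (k : ℕ),
        (Δ_[(1:ℕ)])^[k] g (x+1) = (Δ_[(1:ℕ)])^[k] g x + (Δ_[(1:ℕ)])^[k+1] g x := by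
      intro g k
      rw [Function.iterate_succ_apply' Δ_[(1:ℕ)] k g]
      simp [fwdDiff]
    rw [Function.iterate_succ_apply' Δ_[(1:ℕ)] (m+1)]
    simp only [fwdDiff]
    rw [ih f (x+1), ih f x, hstep f (m+1), hstep f m]
    push_cast
    ring

lemma main_ind (q : ℕ) :
    (∀ v, 2*q < v → (Δ_[(1:ℕ)])^[v] (a q) 0 = 0) ∧
    (Δ_[(1:ℕ)])^[2*q] (a q) 0 = (-1:ℤ)^q * (Nat.doubleFactorial (2*q - 1) : ℤ) := by
  induction q with
  | zero =>
    constructor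
    · intro v hv
      obtain ⟨w, rfl⟩ : ∃ w, v = w + 1 := ⟨v - 1, by omega⟩
      rw [Function.iterate_succ_apply]
      have : Δ_[(1:ℕ)] (a 0) = fun _ => 0 := by
        funext p; simp [fwdDiff, a_zero]
      rw [this]
      induction w with
      | zero => simp
      | succ w ihw => rw [Function.iterate_succ_apply]; simpa using ihw (by omega)
    · simp [a_zero, Nat.doubleFactorial]
  | succ q ih =>
    have key : ∀ m : ℕ, (Δ_[(1:ℕ)])^[m+2] (a (q+1)) 0
        = -(((2:ℤ) + m) * (Δ_[(1:ℕ)])^[m+1] (a q) 0 + (m + 1) * (Δ_[(1:ℕ)])^[m] (a q) 0) := by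
      intro m
      rw [Function.iterate_succ_apply]
      have hd : Δ_[(1:ℕ)] (a (q+1)) = -(fun p : ℕ => ((p:ℤ) + 1) * a q p) := by
        funext p; rw [fwdDiff_a]; simp only [Pi.neg_apply]; ring
      rw [hd, fwdDiff_iter_neg, Pi.neg_apply, fwdDiff_iter_mul]
      push_cast
      ring
    constructor
    · intro v hv
      obtain ⟨m, rfl⟩ : ∃ m, v = m + 2 := ⟨v - 2, by omega⟩
      rw [key m, ih.1 (m+1) (by omega), ih.1 m (by omega)]
      ring
    · have h2 : 2*(q+1) = 2*q + 2 := by ring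
      rw [h2, key (2*q), ih.1 (2*q+1) (by omega), ih.2]
      have hdf : (Nat.doubleFactorial (2*q + 2 - 1) : ℤ)
          = (2*q+1) * (Nat.doubleFactorial (2*q - 1) : ℤ) := by
        cases q with
        | zero => decide
        | succ n =>
          have : 2*(n+1) + 2 - 1 = (2*n+1) + 2 := by omega
          rw [this, Nat.doubleFactorial_add_two]
          have : 2*(n+1) - 1 = 2*n+1 := by omega
          rw [this]
          push_cast
          ring
      rw [hdf]
      push_cast
      ring

lemma b_eq (q v : ℕ) : b q v = (-1:ℤ)^v * (Δ_[(1:ℕ)])^[v] (a q) 0 := by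
  rw [fwdDiff_iter_eq_sum_shift, Finset.mul_sum]
  unfold b a
  refine Finset.sum_congr rfl fun k hk => ?_
  have hk' : k ≤ v := Nat.lt_succ_iff.mp (Finset.mem_range.mp hk)
  obtain ⟨j, rfl⟩ : ∃ j, v = j + k := ⟨v - k, by omega⟩
  have h1 : j + k - k = j := by omega
  have h2 : (-1:ℤ)^(j*2) = 1 := by rw [mul_comm, pow_mul]; norm_num
  simp only [smul_eq_mul, zero_add, mul_one, h1, pow_add]
  linear_combination (-((((j+k).choose k : ℤ)) *
    stirlingFst (k+1) ((k:ℤ) - q + 1) * (-1)^k)) * h2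

lemma df_succ (q : ℕ) : (Nat.doubleFactorial (2*q + 2 - 1) : ℤ)
    = (2*(q:ℤ)+1) * (Nat.doubleFactorial (2*q - 1) : ℤ) := by
  cases q with
  | zero => decide
  | succ n =>
    rw [show 2*(n+1) + 2 - 1 = (2*n+1) + 2 by omega, Nat.doubleFactorial_add_two,
      show 2*(n+1) - 1 = 2*n+1 by omega]
    push_cast
    ring

lemma prod_eq_df (q : ℕ) :
    ∏ i ∈ Finset.range q, (2*(q:ℤ) - 2*i - 1) = (Nat.doubleFactorial (2*q - 1) : ℤ) := by
  induction q with
  | zero => simp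
  | succ q ih =>
    rw [Finset.prod_range_succ']
    push_cast
    have hc : ∏ x ∈ Finset.range q, (2 * ((q:ℤ) + 1) - 2 * ((x:ℤ) + 1) - 1)
        = ∏ x ∈ Finset.range q, (2 * (q:ℤ) - 2 * (x:ℤ) - 1) :=
      Finset.prod_congr rfl (fun i _ => by ring)
    rw [hc, ih, show 2*(q+1) - 1 = 2*q + 2 - 1 by omega, df_succ]
    ring

theorem stmt13 :
    (∀ q : ℕ,
      b q (2 * q) = (-1 : ℤ) ^ q * ∏ i ∈ Finset.range q, (2 * (q : ℤ) - 2 * i - 1) ∧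
      b q (2 * q) = (-1 : ℤ) ^ q * (Nat.doubleFactorial (2 * q - 1) : ℤ)) ∧
    (∀ q v : ℕ, 2 * q < v → b q v = 0) := by
  constructor
  · intro q
    have h := (main_ind q).2
    have hb : b q (2*q) = (-1:ℤ)^q * (Nat.doubleFactorial (2*q - 1) : ℤ) := by
      rw [b_eq, h, pow_mul]
      norm_num
    exact ⟨by rw [hb, prod_eq_df], hb⟩
  · intro q v hv
    rw [b_eq, (main_ind q).1 v hv, mul_zero]
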